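/- Let d ∈ ℕ and β, r ∈ (0,∞). There exists a constant c₁ ∈ (0, 1/9999) depending only on (d,β,r) such that for every integer Q ≥ 2 and every map T: G_{Q,d} → {−1,1}, where G_{Q,d} = { (k₁/(2Q), …, k_d/(2Q)) : k₁,…,k_d odd integers } ∩ [0,1]^d, there exists f ∈ B^β_r([0,1]^d) with sup_{x ∈ [0,1]^d} |f(x)| = c₁/Q^β and f(x) = (c₁/Q^β)·T(a) for every a ∈ G_{Q,d} and every x ∈ [0,1]^d with ‖x − a‖₂ ≤ 1/(5Q). -/

import Mathlib

open MeasureTheory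
open scoped ENNReal NNReal

namespace DNNLogistic

noncomputable section

/-- The unit cube `[0,1]^d` as a subset of `ℝ^d`. -/
def cube (d : ℕ) : Set (Fin d → ℝ) := {x | ∀ i, x i ∈ Set.Icc (0 : ℝ) 1}

/-- The logistic loss `φ(t) = log (1 + e^{-t})`. -/
def logLoss (t : ℝ) : ℝ := Real.log (1 + Real.exp (-t))

/-- `sgn(t) = 1` if `t ≥ 0`, `sgn(t) = -1` otherwise. -/
def rsgn (t : ℝ) : ℝ := if 0 ≤ t then 1 else -1

/-- The Euclidean distance `‖x - z‖₂` on `ℝ^m`. -/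
def eucDist {m : ℕ} (x z : Fin m → ℝ) : ℝ := Real.sqrt (∑ i, (x i - z i) ^ 2)

/-- The logistic risk `R^φ_{η,Q}(f)` of `f` with respect to the conditional probability
function `η` and the marginal distribution `Q` on `[0,1]^d`. -/
def logRisk (d : ℕ) (Q : Measure (Fin d → ℝ)) (η f : (Fin d → ℝ) → ℝ) : ℝ :=
  ∫ x, (η x * logLoss (f x) + (1 - η x) * logLoss (-f x)) ∂Q

/-- The infimum of the logistic risk over all Borel measurable real-valued functions. -/
def infLogRisk (d : ℕ) (Q : Measure (Fin d → ℝ)) (η : (Fin d → ℝ) → ℝ) : ℝ :=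
  sInf {t | ∃ g : (Fin d → ℝ) → ℝ, Measurable g ∧ t = logRisk d Q η g}

/-- The excess logistic risk `E^φ_{η,Q}(f)`. -/
def excessLogRisk (d : ℕ) (Q : Measure (Fin d → ℝ)) (η f : (Fin d → ℝ) → ℝ) : ℝ :=
  logRisk d Q η f - infLogRisk d Q η

/-- The misclassification risk `R_{η,Q}(f)`; note `1{sgn(f x) = -1} = 1{f x < 0}` and
`1{sgn(f x) = 1} = 1{0 ≤ f x}`. -/
def misRisk (d : ℕ) (Q : Measure (Fin d → ℝ)) (η f : (Fin d → ℝ) → ℝ) : ℝ :=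
  ∫ x, (η x * (if f x < 0 then (1 : ℝ) else 0)
      + (1 - η x) * (if 0 ≤ f x then (1 : ℝ) else 0)) ∂Q

/-- The infimum of the misclassification risk over all Borel measurable functions. -/
def infMisRisk (d : ℕ) (Q : Measure (Fin d → ℝ)) (η : (Fin d → ℝ) → ℝ) : ℝ :=
  sInf {t | ∃ g : (Fin d → ℝ) → ℝ, Measurable g ∧ t = misRisk d Q η g}

/-- The excess misclassification error `E_{η,Q}(f)`. -/
def excessMisRisk (d : ℕ) (Q : Measure (Fin d → ℝ)) (η f : (Fin d → ℝ) → ℝ) : ℝ :=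
  misRisk d Q η f - infMisRisk d Q η

/-- The joint distribution `P_{η,Q}` on `ℝ^d × ℝ`: the marginal on the first factor is `Q`,
and the conditional distribution of the label given `x` puts mass `η x` on `1` and mass
`1 - η x` on `-1`.  It satisfies `P_{η,Q}(S) = ∫ (η x • 1_S(x,1) + (1 - η x) • 1_S(x,-1)) dQ`. -/
def PeQ (d : ℕ) (Q : Measure (Fin d → ℝ)) (η : (Fin d → ℝ) → ℝ) :
    Measure ((Fin d → ℝ) × ℝ) :=
  (Q.withDensity fun x => ENNReal.ofReal (η x)).map (fun x => (x, (1 : ℝ)))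
    + (Q.withDensity fun x => ENNReal.ofReal (1 - η x)).map (fun x => (x, (-1 : ℝ)))

/-- The logistic risk `R^φ_P(f)` with respect to a joint distribution `P` on
`[0,1]^d × {-1,1}`. -/
def jointLogRisk (d : ℕ) (P : Measure ((Fin d → ℝ) × ℝ)) (f : (Fin d → ℝ) → ℝ) : ℝ :=
  ∫ z, logLoss (z.2 * f z.1) ∂P

/-- The Lebesgue measure on the cube `[0,1]^d`. -/
def cubeVolume (d : ℕ) : Measure (Fin d → ℝ) := volume.restrict (cube d)

/-- The `n`-fold product measure `P^{⊗n}` on the sample space. -/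
def nSample (d n : ℕ) (P : Measure ((Fin d → ℝ) × ℝ)) :
    Measure (Fin n → (Fin d → ℝ) × ℝ) :=
  Measure.pi fun _ => P

/-- `fhat` is an empirical logistic-risk minimizer over the class `Fcls` from samples of
size `n`: it is jointly Borel measurable, and for every sample
`z ∈ ([0,1]^d × {-1,1})^n` the function `fhat z` belongs to `Fcls` and minimizes the
empirical logistic risk over `Fcls`. -/
def IsERM (d n : ℕ) (Fcls : Set ((Fin d → ℝ) → ℝ))
    (fhat : (Fin n → (Fin d → ℝ) × ℝ) → (Fin d → ℝ) → ℝ) : Prop :=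
  Measurable (fun p : (Fin n → (Fin d → ℝ) × ℝ) × (Fin d → ℝ) => fhat p.1 p.2) ∧
  ∀ z : Fin n → (Fin d → ℝ) × ℝ, (∀ i, z i ∈ (cube d) ×ˢ ({-1, 1} : Set ℝ)) →
    fhat z ∈ Fcls ∧
    ∀ f ∈ Fcls,
      ∑ i, logLoss ((z i).2 * fhat z ((z i).1)) ≤ ∑ i, logLoss ((z i).2 * f ((z i).1))

/-- The successive hidden layers of a fully connected ReLU network:
`u₀ = x` and `u_{k+1} = σ_{v_{k+1}}(W_k u_k)`. -/
def fnnHidden (m : ℕ → ℕ) (W : ∀ k : ℕ, Matrix (Fin (m (k + 1))) (Fin (m k)) ℝ)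
    (v : ∀ k : ℕ, Fin (m k) → ℝ) : (k : ℕ) → (Fin (m 0) → ℝ) → (Fin (m k) → ℝ)
  | 0 => fun x => x
  | (k + 1) => fun x j => max ((W k).mulVec (fnnHidden m W v k x) j - v (k + 1) j) 0

/-- `f ∈ F^FNN_d(G, N, S, B, F)`: `f : ℝ^d → ℝ` is realized by a fully connected ReLU
network `x ↦ W_L σ_{v_L} W_{L-1} ⋯ W_1 σ_{v_1} W_0 x` with depth `L ≤ G`, hidden widths
at most `N`, at most `S` nonzero entries among all weight matrices and bias vectors, all
entries bounded by `B` in absolute value, and `sup_{x ∈ [0,1]^d} |f x| ≤ F`. -/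
def IsFNN (d : ℕ) (G N S B : ℝ) (F : ℝ≥0∞) (f : (Fin d → ℝ) → ℝ) : Prop :=
  ∃ (L : ℕ) (m : ℕ → ℕ) (W : ∀ k : ℕ, Matrix (Fin (m (k + 1))) (Fin (m k)) ℝ)
    (v : ∀ k : ℕ, Fin (m k) → ℝ) (hm0 : m 0 = d) (hmL : m (L + 1) = 1),
    1 ≤ L ∧ (L : ℝ) ≤ G ∧
    (∀ k : ℕ, 1 ≤ k → k ≤ L → (m k : ℝ) ≤ N) ∧
    (((∑ k ∈ Finset.range (L + 1),
          Set.ncard {p : Fin (m (k + 1)) × Fin (m k) | W k p.1 p.2 ≠ 0}) +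
        (∑ k ∈ Finset.Icc 1 L, Set.ncard {j : Fin (m k) | v k j ≠ 0}) : ℝ) ≤ S) ∧
    (∀ k : ℕ, k ≤ L → ∀ i j, |W k i j| ≤ B) ∧
    (∀ k : ℕ, 1 ≤ k → k ≤ L → ∀ j, |v k j| ≤ B) ∧
    (∀ x ∈ cube d, ENNReal.ofReal |f x| ≤ F) ∧
    (∀ x : Fin d → ℝ,
      f x = (W L).mulVec (fnnHidden m W v L fun i => x (Fin.cast hm0 i)) (Fin.cast hmL.symm 0))

/-- The partial derivative (within the cube) of `f` in the `i`-th coordinate direction. -/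
def pderivW (m : ℕ) (i : Fin m) (f : (Fin m → ℝ) → ℝ) : (Fin m → ℝ) → ℝ :=
  fun x => fderivWithin ℝ f (cube m) x (Pi.single i 1)

/-- The iterated partial derivative of `f` along the list of coordinate directions `l`. -/
def derivListW (m : ℕ) : List (Fin m) → ((Fin m → ℝ) → ℝ) → ((Fin m → ℝ) → ℝ)
  | [], f => f
  | (i :: l), f => derivListW m l (pderivW m i f)

/-- Membership in the Hölder ball `B^β_r([0,1]^m)`: with `k = ⌈β⌉ - 1` and
`λ = β - ⌈β⌉ + 1`, `f` has continuous partial derivatives (within the cube) up to order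
`k`, and the maximum of the sup-norms of its derivatives of order at most `k` plus the
maximum of the Hölder-`λ` seminorms of its derivatives of order `k` is at most `r`. -/
def MemHolderBall (m : ℕ) (β r : ℝ) (f : (Fin m → ℝ) → ℝ) : Prop :=
  (∀ l : List (Fin m), l.length < ⌈β⌉₊ - 1 →
    DifferentiableOn ℝ (derivListW m l f) (cube m)) ∧
  (∀ l : List (Fin m), l.length ≤ ⌈β⌉₊ - 1 →
    ContinuousOn (derivListW m l f) (cube m)) ∧
  ∃ A Bc : ℝ, A + Bc ≤ r ∧
    (∀ l : List (Fin m), l.length ≤ ⌈β⌉₊ - 1 → ∀ x ∈ cube m, |derivListW m l f x| ≤ A) ∧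
    (∀ l : List (Fin m), l.length = ⌈β⌉₊ - 1 → ∀ x ∈ cube m, ∀ z ∈ cube m, x ≠ z →
      |derivListW m l f x - derivListW m l f z| ≤ Bc * eucDist x z ^ (β - (⌈β⌉₊ : ℝ) + 1))

/-- `f ∈ G^M_d(dmax)`: on `[0,1]^d`, `f` computes the maximum of at most `dmax` of its
input coordinates. -/
def GM (d dmax : ℕ) (f : (Fin d → ℝ) → ℝ) : Prop :=
  ∃ (I : Finset (Fin d)) (hI : I.Nonempty), I.card ≤ dmax ∧
    ∀ x ∈ cube d, f x = I.sup' hI fun i => x i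

/-- `f ∈ G^H_d(dstar, β, r)`: on `[0,1]^d`, `f` depends on exactly `dstar` of its input
coordinates, through a function in the Hölder ball `B^β_r([0,1]^{dstar})`. -/
def GH (d dstar : ℕ) (β r : ℝ) (f : (Fin d → ℝ) → ℝ) : Prop :=
  ∃ (I : Finset (Fin d)) (hI : I.card = dstar) (g : (Fin dstar → ℝ) → ℝ),
    MemHolderBall dstar β r g ∧
    ∀ x ∈ cube d, f x = g fun j => x ↑(I.orderIsoOfFin hI j)

/-- Iterated composition `h_{n-1} ∘ ⋯ ∘ h_1 ∘ h_0` of a chain of maps with varying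
dimensions `D : ℕ → ℕ`. -/
def depChain (D : ℕ → ℕ) (h : ∀ i : ℕ, (Fin (D i) → ℝ) → (Fin (D (i + 1)) → ℝ)) :
    (n : ℕ) → (Fin (D 0) → ℝ) → (Fin (D n) → ℝ)
  | 0 => fun x => x
  | (n + 1) => fun x => h n (depChain D h n x)

/-- `f ∈ G^CHOM_d(q, K, dmax, dstar, β, r)`: on `[0,1]^d`, `f` is a composition
`h_q ∘ ⋯ ∘ h_0` where `h_0 : [0,1]^d → [0,1]^K`, `h_i : [0,1]^K → [0,1]^K` for
`0 < i < q`, `h_q : [0,1]^{d or K} → ℝ`, and each coordinate function of each `h_i`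
belongs to `G^H(dstar, β, r) ∪ G^M(dmax)`. -/
def GCHOM (q d dmax dstar K : ℕ) (β r : ℝ) (f : (Fin d → ℝ) → ℝ) : Prop :=
  ∃ (D : ℕ → ℕ) (h : ∀ i : ℕ, (Fin (D i) → ℝ) → (Fin (D (i + 1)) → ℝ))
    (hD0 : D 0 = d) (hDq : D (q + 1) = 1),
    (∀ i : ℕ, 1 ≤ i → i ≤ q → D i = K) ∧
    (∀ i : ℕ, i ≤ q → ∀ j : Fin (D (i + 1)),
      GH (D i) dstar β r (fun x => h i x j) ∨ GM (D i) dmax (fun x => h i x j)) ∧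
    (∀ i : ℕ, i < q → ∀ x ∈ cube (D i), h i x ∈ cube (D (i + 1))) ∧
    (∀ x ∈ cube d,
      f x = depChain D h (q + 1) (fun i => x (Fin.cast hD0 i)) (Fin.cast hDq.symm 0))

/-- `f ∈ G^CH_d(q, K, dstar, β, r)`: as `G^CHOM`, but every coordinate function belongs
to `G^H(dstar, β, r)`. -/
def GCH (q d dstar K : ℕ) (β r : ℝ) (f : (Fin d → ℝ) → ℝ) : Prop :=
  ∃ (D : ℕ → ℕ) (h : ∀ i : ℕ, (Fin (D i) → ℝ) → (Fin (D (i + 1)) → ℝ))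
    (hD0 : D 0 = d) (hDq : D (q + 1) = 1),
    (∀ i : ℕ, 1 ≤ i → i ≤ q → D i = K) ∧
    (∀ i : ℕ, i ≤ q → ∀ j : Fin (D (i + 1)), GH (D i) dstar β r (fun x => h i x j)) ∧
    (∀ i : ℕ, i < q → ∀ x ∈ cube (D i), h i x ∈ cube (D (i + 1))) ∧
    (∀ x ∈ cube d,
      f x = depChain D h (q + 1) (fun i => x (Fin.cast hD0 i)) (Fin.cast hDq.symm 0))

/-- The sup-norm over the cube of the (componentwise) difference of two vector-valued
functions. -/
def supDiffVec (m k : ℕ) (g g' : (Fin m → ℝ) → (Fin k → ℝ)) : ℝ :=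
  sSup {t | ∃ x ∈ cube m, ∃ j : Fin k, t = |g x j - g' x j|}

/-- The binary entropy function `H`. -/
def entH (t : ℝ) : ℝ :=
  if t = 0 ∨ t = 1 then 0 else t * Real.log (1 / t) + (1 - t) * Real.log (1 / (1 - t))

/-- `sup { 1/(2(2 + e^t + e^{-t})) : min u v ≤ t ≤ max u v }`. -/
def wSup (u v : ℝ) : ℝ :=
  sSup {s | ∃ t ∈ Set.Icc (min u v) (max u v), s = 1 / (2 * (2 + Real.exp t + Real.exp (-t)))}

/-- The function `J` of Statement 19. -/
def Jfun (x y : ℝ) : ℝ :=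
  (x + y) * Real.log (2 / (x + y)) + (2 - x - y) * Real.log (2 / (2 - x - y))
    - (x * Real.log (1 / x) + (1 - x) * Real.log (1 / (1 - x))
        + y * Real.log (1 / y) + (1 - y) * Real.log (1 / (1 - y)))

/-- The grid `G_{Q,d}` of points of `[0,1]^d` whose coordinates are odd multiples of
`1/(2Q)`. -/
def oddGrid (d Qn : ℕ) : Set (Fin d → ℝ) :=
  {a | a ∈ cube d ∧ ∀ i, ∃ k : ℤ, Odd k ∧ a i = (k : ℝ) / (2 * (Qn : ℝ))}

section Aux
set_option linter.unusedTactic false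
set_option linter.unnecessarySimpa false
open scoped ContDiff


def bump : ContDiffBump (0:ℝ) := ⟨1/5, 2/5, by norm_num, by norm_num⟩

def g : ℝ → ℝ := fun t => bump t

lemma g_contDiff : ContDiff ℝ ∞ g := bump.contDiff

lemma g_nonneg (t : ℝ) : 0 ≤ g t := bump.nonneg

lemma g_le_one (t : ℝ) : g t ≤ 1 := bump.le_one

lemma g_one {t : ℝ} (h : |t| ≤ 1/5) : g t = 1 :=
  bump.one_of_mem_closedBall (by simpa [Metric.mem_closedBall, Real.dist_eq, bump] using h)

lemma g_zero {t : ℝ} (h : 2/5 ≤ |t|) : g t = 0 :=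
  bump.zero_of_le_dist (by simpa [Real.dist_eq, bump] using h)

/-- iterated derivatives of `g` vanish where `|t| > 2/5`. -/
lemma dg_zero (j : ℕ) {t : ℝ} (h : 2/5 < |t|) : iteratedDeriv j g t = 0 := by
  induction j generalizing t with
  | zero => simpa using g_zero h.le
  | succ j ih =>
    rw [iteratedDeriv_succ]
    have hev : iteratedDeriv j g =ᶠ[nhds t] (fun _ => (0:ℝ)) := by
      have hopen : IsOpen {s : ℝ | 2/5 < |s|} := isOpen_lt continuous_const continuous_abs
      filter_upwards [hopen.mem_nhds h] with s hs using ih hs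
    rw [hev.deriv_eq]
    simp

lemma dg_bound (j : ℕ) : ∃ C : ℝ, 0 ≤ C ∧ ∀ t, |iteratedDeriv j g t| ≤ C := by
  have hcont : Continuous (iteratedDeriv j g) := by
    have := g_contDiff.iterate_deriv j
    rw [← iteratedDeriv_eq_iterate] at this
    exact this.continuous
  obtain ⟨C, hC⟩ := (isCompact_Icc (a := (-1:ℝ)) (b := 1)).exists_bound_of_continuousOn
    hcont.continuousOn
  refine ⟨max C 0, le_max_right _ _, fun t => ?_⟩
  by_cases ht : t ∈ Set.Icc (-1:ℝ) 1
  · exact le_trans (by simpa using hC t ht) (le_max_left _ _)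
  · have : 2/5 < |t| := by
      simp only [Set.mem_Icc, not_and_or, not_le] at ht
      rcases ht with h | h
      · calc (2:ℝ)/5 < 1 := by norm_num
          _ ≤ |t| := by rw [abs_of_nonpos (by linarith)]; linarith
      · calc (2:ℝ)/5 < 1 := by norm_num
          _ ≤ |t| := le_trans h.le (le_abs_self t)
    rw [dg_zero j this]
    simpa using le_max_right C 0



/-- A uniform bound for derivatives of `g` of order up to `k+1`. -/
def Mb (k : ℕ) : ℝ := 1 + ∑ j ∈ Finset.range (k+2), Classical.choose (dg_bound j)

lemma one_le_Mb (k : ℕ) : 1 ≤ Mb k := by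
  have : 0 ≤ ∑ j ∈ Finset.range (k+2), Classical.choose (dg_bound j) :=
    Finset.sum_nonneg fun j _ => (Classical.choose_spec (dg_bound j)).1
  simp only [Mb]; linarith

lemma dg_le_Mb (k : ℕ) {j : ℕ} (hj : j ≤ k + 1) (t : ℝ) : |iteratedDeriv j g t| ≤ Mb k := by
  have h1 := (Classical.choose_spec (dg_bound j)).2 t
  have h2 : Classical.choose (dg_bound j) ≤ ∑ i ∈ Finset.range (k+2), Classical.choose (dg_bound i) :=
    Finset.single_le_sum (fun i _ => (Classical.choose_spec (dg_bound i)).1)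
      (Finset.mem_range.mpr (by omega))
  simp only [Mb]; linarith

variable (d Q : ℕ)

def GvF (v : Fin d → Fin Q) (n : Fin d → ℕ) : (Fin d → ℝ) → ℝ :=
  fun x => ∏ i, iteratedDeriv (n i) g ((Q:ℝ) * x i - ((v i : ℝ) + 1/2))

def gridPt (v : Fin d → Fin Q) : Fin d → ℝ := fun i => (2 * (v i : ℝ) + 1) / (2 * (Q:ℝ))

def FF (T : (Fin d → ℝ) → ℝ) (c : ℝ) (n : Fin d → ℕ) (p : ℕ) : (Fin d → ℝ) → ℝ :=
  fun x => c * (Q:ℝ)^p * ∑ v : Fin d → Fin Q, T (gridPt d Q v) * GvF d Q v n x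

def upd (n : Fin d → ℕ) (i : Fin d) : Fin d → ℕ := Function.update n i (n i + 1)

lemma contDiff_term (v : Fin d → Fin Q) (n : Fin d → ℕ) (i : Fin d) :
    ContDiff ℝ ∞ (fun x : Fin d → ℝ => iteratedDeriv (n i) g ((Q:ℝ) * x i - ((v i : ℝ) + 1/2))) := by
  have h1 : ContDiff ℝ ∞ (iteratedDeriv (n i) g) := by
    have := g_contDiff.iterate_deriv (n i); rwa [← iteratedDeriv_eq_iterate] at this
  exact h1.comp (((contDiff_apply ℝ ℝ i).const_smul (Q:ℝ)).sub contDiff_const)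

lemma contDiff_FF (T : (Fin d → ℝ) → ℝ) (c : ℝ) (n : Fin d → ℕ) (p : ℕ) :
    ContDiff ℝ ∞ (FF d Q T c n p) := by
  unfold FF
  exact contDiff_const.mul <| ContDiff.sum fun v _ =>
    contDiff_const.mul <| contDiff_prod fun i _ => contDiff_term d Q v n i

lemma dg_contDiff (j : ℕ) : ContDiff ℝ ∞ (iteratedDeriv j g) := by
  have := g_contDiff.iterate_deriv j; rwa [← iteratedDeriv_eq_iterate] at this

lemma hasFDerivAt_factor (v : Fin d → Fin Q) (n : Fin d → ℕ) (i : Fin d) (x : Fin d → ℝ) :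
    HasFDerivAt (fun x : Fin d → ℝ => iteratedDeriv (n i) g ((Q:ℝ) * x i - ((v i : ℝ) + 1/2)))
      ((((Q:ℝ)) * iteratedDeriv (n i + 1) g ((Q:ℝ) * x i - ((v i : ℝ) + 1/2))) •
        (ContinuousLinearMap.proj i : (Fin d → ℝ) →L[ℝ] ℝ)) x := by
  set s : ℝ := (Q:ℝ) * x i - ((v i : ℝ) + 1/2) with hs
  have hinner : HasFDerivAt (fun x : Fin d → ℝ => (Q:ℝ) * x i - ((v i : ℝ) + 1/2))
      ((Q:ℝ) • (ContinuousLinearMap.proj i : (Fin d → ℝ) →L[ℝ] ℝ)) x := by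
    have hp : HasFDerivAt (fun x : Fin d → ℝ => x i)
        (ContinuousLinearMap.proj i : (Fin d → ℝ) →L[ℝ] ℝ) x :=
      (ContinuousLinearMap.proj i : (Fin d → ℝ) →L[ℝ] ℝ).hasFDerivAt
    exact (hp.const_mul (Q:ℝ)).sub_const _
  have houter : HasDerivAt (iteratedDeriv (n i) g) (iteratedDeriv (n i + 1) g s) s := by
    have hd : DifferentiableAt ℝ (iteratedDeriv (n i) g) s :=
      ((dg_contDiff (n i)).differentiable (by simp)).differentiableAt
    have := hd.hasDerivAt
    rwa [show deriv (iteratedDeriv (n i) g) s = iteratedDeriv (n i + 1) g s by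
      rw [iteratedDeriv_succ]] at this
  have := houter.comp_hasFDerivAt x hinner
  rwa [smul_smul, mul_comm] at this

lemma hasFDerivAt_GvF (v : Fin d → Fin Q) (n : Fin d → ℕ) (x : Fin d → ℝ) :
    HasFDerivAt (GvF d Q v n)
      (∑ i : Fin d, ((Q:ℝ) * GvF d Q v (upd d n i) x) •
        (ContinuousLinearMap.proj i : (Fin d → ℝ) →L[ℝ] ℝ)) x := by
  classical
  have h := HasFDerivAt.finset_prod (u := Finset.univ)
    (g := fun i (x : Fin d → ℝ) => iteratedDeriv (n i) g ((Q:ℝ) * x i - ((v i : ℝ) + 1/2)))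
    (g' := fun i => (((Q:ℝ)) * iteratedDeriv (n i + 1) g ((Q:ℝ) * x i - ((v i : ℝ) + 1/2))) •
        (ContinuousLinearMap.proj i : (Fin d → ℝ) →L[ℝ] ℝ))
    (fun i _ => hasFDerivAt_factor d Q v n i x)
  refine HasFDerivAt.congr_fderiv (f := GvF d Q v n) h ?_
  refine Finset.sum_congr rfl fun i _ => ?_
  beta_reduce
  rw [smul_smul]
  congr 1
  have hprod : GvF d Q v (upd d n i) x
      = iteratedDeriv (n i + 1) g ((Q:ℝ) * x i - ((v i : ℝ) + 1/2)) *
        ∏ j ∈ Finset.univ.erase i, iteratedDeriv (n j) g ((Q:ℝ) * x j - ((v j : ℝ) + 1/2)) := by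
    rw [GvF, ← Finset.mul_prod_erase Finset.univ _ (Finset.mem_univ i)]
    congr 1
    · simp [upd]
    · exact Finset.prod_congr rfl fun j hj => by
        rw [upd, Function.update_of_ne (Finset.ne_of_mem_erase hj)]
  rw [hprod]; ring

lemma hasFDerivAt_FF (T : (Fin d → ℝ) → ℝ) (c : ℝ) (n : Fin d → ℕ) (p : ℕ) (x : Fin d → ℝ) :
    HasFDerivAt (FF d Q T c n p)
      (∑ i : Fin d, (FF d Q T c (upd d n i) (p+1) x) •
        (ContinuousLinearMap.proj i : (Fin d → ℝ) →L[ℝ] ℝ)) x := by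
  classical
  have hsum : HasFDerivAt (fun x => ∑ v : Fin d → Fin Q, T (gridPt d Q v) * GvF d Q v n x)
      (∑ v : Fin d → Fin Q, T (gridPt d Q v) •
        (∑ i : Fin d, ((Q:ℝ) * GvF d Q v (upd d n i) x) •
          (ContinuousLinearMap.proj i : (Fin d → ℝ) →L[ℝ] ℝ))) x :=
    HasFDerivAt.fun_sum fun v _ => (hasFDerivAt_GvF d Q v n x).const_mul (T (gridPt d Q v))
  have h := hsum.const_mul (c * (Q:ℝ)^p)
  refine h.congr_fderiv ?_
  ext w
  simp only [ContinuousLinearMap.coe_sum', Finset.sum_apply, ContinuousLinearMap.coe_smul',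
    Pi.smul_apply, ContinuousLinearMap.proj_apply, smul_eq_mul, FF]
  simp only [Finset.mul_sum, Finset.sum_mul, mul_assoc]
  rw [Finset.sum_comm]
  refine Finset.sum_congr rfl fun i _ => Finset.sum_congr rfl fun v _ => by push_cast; ring


lemma GvF_ne_zero {v : Fin d → Fin Q} {n : Fin d → ℕ} {x : Fin d → ℝ}
    (h : GvF d Q v n x ≠ 0) (i : Fin d) : |(Q:ℝ) * x i - ((v i : ℝ) + 1/2)| ≤ 2/5 := by
  by_contra hc
  exact h (Finset.prod_eq_zero (Finset.mem_univ i) (dg_zero (n i) (lt_of_not_ge hc)))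

lemma GvF_unique {v w : Fin d → Fin Q} {n n' : Fin d → ℕ} {x : Fin d → ℝ}
    (hv : GvF d Q v n x ≠ 0) (hw : GvF d Q w n' x ≠ 0) : v = w := by
  funext i
  have h1 := GvF_ne_zero d Q hv i
  have h2 := GvF_ne_zero d Q hw i
  have : |((v i : ℝ)) - ((w i : ℝ))| < 1 := by
    have := abs_sub_abs_le_abs_sub ((Q:ℝ) * x i - ((v i : ℝ) + 1/2)) ((Q:ℝ) * x i - ((w i : ℝ) + 1/2))
    have h3 : |((v i : ℝ)) - ((w i : ℝ))| =
        |((Q:ℝ) * x i - ((w i : ℝ) + 1/2)) - ((Q:ℝ) * x i - ((v i : ℝ) + 1/2))| := by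
      congr 1; ring
    rw [h3]
    calc |((Q:ℝ) * x i - ((w i : ℝ) + 1/2)) - ((Q:ℝ) * x i - ((v i : ℝ) + 1/2))|
        ≤ |(Q:ℝ) * x i - ((w i : ℝ) + 1/2)| + |(Q:ℝ) * x i - ((v i : ℝ) + 1/2)| :=
          abs_sub _ _
      _ < 1 := by linarith
  obtain ⟨hl, hr⟩ := abs_lt.mp this
  have hvw : ((v i : ℕ) : ℤ) = ((w i : ℕ) : ℤ) := by
    have hl' : (-1 : ℤ) < (v i : ℕ) - ((w i : ℕ) : ℤ) := by exact_mod_cast hl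
    have hr' : ((v i : ℕ) : ℤ) - ((w i : ℕ) : ℤ) < 1 := by exact_mod_cast hr
    omega
  exact Fin.ext (by exact_mod_cast hvw)

lemma GvF_abs_le {v : Fin d → Fin Q} {n : Fin d → ℕ} (k : ℕ) (hn : ∀ j, n j ≤ k + 1)
    (x : Fin d → ℝ) : |GvF d Q v n x| ≤ Mb k ^ d := by
  rw [GvF, Finset.abs_prod]
  calc ∏ i, |iteratedDeriv (n i) g ((Q:ℝ) * x i - ((v i : ℝ) + 1/2))|
      ≤ ∏ _i : Fin d, Mb k := Finset.prod_le_prod (fun i _ => abs_nonneg _)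
        (fun i _ => dg_le_Mb k (hn i) _)
    _ = Mb k ^ d := by simp [Finset.prod_const]

lemma GvF_abs_le_one {v : Fin d → Fin Q} (x : Fin d → ℝ) : |GvF d Q v 0 x| ≤ 1 := by
  rw [GvF, Finset.abs_prod]
  calc ∏ i, |iteratedDeriv ((0 : Fin d → ℕ) i) g ((Q:ℝ) * x i - ((v i : ℝ) + 1/2))|
      ≤ ∏ _i : Fin d, 1 := Finset.prod_le_prod (fun i _ => abs_nonneg _) (fun i _ => by
        simp only [Pi.zero_apply, iteratedDeriv_zero]
        rw [abs_of_nonneg (g_nonneg _)]; exact g_le_one _)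
    _ = 1 := by simp

lemma sum_abs_le {T : (Fin d → ℝ) → ℝ} (hT : ∀ v : Fin d → Fin Q, |T (gridPt d Q v)| ≤ 1)
    {n : Fin d → ℕ} {B : ℝ} (hB : 0 ≤ B) (x : Fin d → ℝ)
    (hG : ∀ v : Fin d → Fin Q, |GvF d Q v n x| ≤ B) :
    |∑ v : Fin d → Fin Q, T (gridPt d Q v) * GvF d Q v n x| ≤ B := by
  classical
  by_cases hall : ∀ v : Fin d → Fin Q, GvF d Q v n x = 0
  · rw [Finset.sum_eq_zero fun v _ => by rw [hall v, mul_zero]]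
    simpa using hB
  · push_neg at hall
    obtain ⟨v₀, hv₀⟩ := hall
    rw [Finset.sum_eq_single v₀ (fun b _ hb => by
      by_cases hzb : GvF d Q b n x = 0
      · rw [hzb, mul_zero]
      · exact absurd (GvF_unique d Q hzb hv₀) hb) (fun h => absurd (Finset.mem_univ v₀) h)]
    calc |T (gridPt d Q v₀) * GvF d Q v₀ n x|
        = |T (gridPt d Q v₀)| * |GvF d Q v₀ n x| := abs_mul _ _
      _ ≤ 1 * B := mul_le_mul (hT v₀) (hG v₀) (abs_nonneg _) zero_le_one
      _ = B := one_mul B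

lemma cube_eq_pi (d : ℕ) : cube d = Set.pi Set.univ (fun _ : Fin d => Set.Icc (0:ℝ) 1) := by
  ext x
  simp only [cube, Set.mem_pi, Set.mem_univ, forall_true_left, Set.mem_setOf_eq]

lemma uniqueDiffOn_cube (d : ℕ) : UniqueDiffOn ℝ (cube d) := by
  rw [cube_eq_pi]
  exact UniqueDiffOn.pi fun i _ => uniqueDiffOn_Icc zero_lt_one

lemma convex_cube (d : ℕ) : Convex ℝ (cube d) := by
  rw [cube_eq_pi]
  exact convex_pi fun i _ => convex_Icc _ _

lemma derivListW_congr (m : ℕ) (l : List (Fin m)) {f f' : (Fin m → ℝ) → ℝ}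
    (h : ∀ y ∈ cube m, f y = f' y) : ∀ x ∈ cube m, derivListW m l f x = derivListW m l f' x := by
  induction l generalizing f f' with
  | nil => exact h
  | cons i l ih =>
    intro x hx
    refine ih (fun y hy => ?_) x hx
    unfold pderivW
    rw [fderivWithin_congr (fun z hz => h z hz) (h y hy)]

/-- on the cube, `derivListW` applied to `FF n p` is another `FF`. -/
lemma derivListW_FF (T : (Fin d → ℝ) → ℝ) (c : ℝ) (l : List (Fin d)) :
    ∀ (n : Fin d → ℕ) (p : ℕ), ∃ n' : Fin d → ℕ, (∀ j, n' j ≤ l.length + n j) ∧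
      ∀ x ∈ cube d, derivListW d l (FF d Q T c n p) x = FF d Q T c n' (p + l.length) x := by
  induction l with
  | nil => intro n p; exact ⟨n, fun j => by simp, fun x _ => by simp [derivListW]⟩
  | cons i l ih =>
    intro n p
    obtain ⟨n', hn', heq⟩ := ih (upd d n i) (p + 1)
    refine ⟨n', fun j => ?_, fun x hx => ?_⟩
    · calc n' j ≤ l.length + upd d n i j := hn' j
        _ ≤ l.length + (n j + 1) := by
          gcongr
          by_cases hj : j = i
          · subst hj; simp [upd]
          · rw [upd, Function.update_of_ne hj]; omega
        _ = (i :: l).length + n j := by simp [List.length_cons]; omega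
    · show derivListW d l (pderivW d i (FF d Q T c n p)) x = _
      have hpd : ∀ y ∈ cube d, pderivW d i (FF d Q T c n p) y = FF d Q T c (upd d n i) (p+1) y := by
        intro y hy
        have hfd := (hasFDerivAt_FF d Q T c n p y).hasFDerivWithinAt.fderivWithin
          (uniqueDiffOn_cube d y hy)
        rw [pderivW, hfd]
        simp [ContinuousLinearMap.proj_apply, Pi.single_apply]
      calc derivListW d l (pderivW d i (FF d Q T c n p)) x
          = derivListW d l (FF d Q T c (upd d n i) (p+1)) x := derivListW_congr d l hpd x hx
        _ = FF d Q T c n' (p + 1 + l.length) x := heq x hx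
        _ = FF d Q T c n' (p + (i :: l).length) x := by rw [List.length_cons]; ring_nf

lemma abs_coord_le_eucDist {m : ℕ} (x z : Fin m → ℝ) (i : Fin m) : |x i - z i| ≤ eucDist x z := by
  rw [eucDist, ← Real.sqrt_sq_eq_abs]
  exact Real.sqrt_le_sqrt (Finset.single_le_sum (f := fun j => (x j - z j)^2) (fun j _ => sq_nonneg _) (Finset.mem_univ i))

lemma eucDist_pos {m : ℕ} {x z : Fin m → ℝ} (h : x ≠ z) : 0 < eucDist x z := by
  obtain ⟨i, hi⟩ : ∃ i, x i ≠ z i := by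
    by_contra hc; push_neg at hc; exact h (funext hc)
  have : 0 < |x i - z i| := abs_pos.mpr (sub_ne_zero.mpr hi)
  exact lt_of_lt_of_le this (abs_coord_le_eucDist x z i)

lemma eucDist_nonneg {m : ℕ} (x z : Fin m → ℝ) : 0 ≤ eucDist x z := Real.sqrt_nonneg _

lemma norm_sub_le_eucDist {m : ℕ} (x z : Fin m → ℝ) : ‖x - z‖ ≤ eucDist x z := by
  refine (pi_norm_le_iff_of_nonneg (eucDist_nonneg x z)).mpr fun i => ?_
  simpa [Real.norm_eq_abs] using abs_coord_le_eucDist x z i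

lemma min_le_rpow {t lam : ℝ} (ht : 0 ≤ t) (h0 : 0 < lam) (h1 : lam ≤ 1) :
    min t 1 ≤ t ^ lam := by
  rcases eq_or_lt_of_le ht with h | h
  · rw [← h, Real.zero_rpow (ne_of_gt h0)]; simp
  rcases le_or_gt t 1 with h2 | h2
  · calc min t 1 ≤ t := min_le_left _ _
      _ = t ^ (1:ℝ) := (Real.rpow_one t).symm
      _ ≤ t ^ lam := Real.rpow_le_rpow_of_exponent_ge h h2 h1
  · calc min t 1 ≤ 1 := min_le_right _ _
      _ ≤ t ^ lam := Real.one_le_rpow h2.le h0.le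

lemma FF_abs_le {T : (Fin d → ℝ) → ℝ} (hT : ∀ v : Fin d → Fin Q, |T (gridPt d Q v)| ≤ 1)
    {c : ℝ} (hc : 0 ≤ c) {n : Fin d → ℕ} (k : ℕ) (hn : ∀ j, n j ≤ k + 1) (p : ℕ) (x : Fin d → ℝ) :
    |FF d Q T c n p x| ≤ c * (Q:ℝ)^p * Mb k ^ d := by
  rw [FF, abs_mul, abs_mul, abs_of_nonneg hc, abs_of_nonneg (by positivity : (0:ℝ) ≤ (Q:ℝ)^p)]
  have hMb1 := one_le_Mb k
  gcongr
  exact sum_abs_le d Q hT (by positivity) x fun v => GvF_abs_le d Q k hn x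


/-- Lipschitz bound on the cube for `FF`. -/
lemma FF_lip {T : (Fin d → ℝ) → ℝ} (hT : ∀ v : Fin d → Fin Q, |T (gridPt d Q v)| ≤ 1)
    {c : ℝ} (hc : 0 ≤ c) {n : Fin d → ℕ} (k : ℕ) (hn : ∀ j, n j ≤ k) (p : ℕ)
    {x z : Fin d → ℝ} (hx : x ∈ cube d) (hz : z ∈ cube d) :
    |FF d Q T c n p x - FF d Q T c n p z| ≤
      (d * (c * (Q:ℝ)^(p+1) * Mb k ^ d)) * eucDist x z := by
  set C : ℝ := d * (c * (Q:ℝ)^(p+1) * Mb k ^ d) with hC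
  have hC0 : 0 ≤ c * (Q:ℝ)^(p+1) * Mb k ^ d := by
    have := one_le_Mb k; positivity
  have hbound : ∀ y, ‖fderiv ℝ (FF d Q T c n p) y‖ ≤ C := by
    intro y
    rw [(hasFDerivAt_FF d Q T c n p y).fderiv]
    refine ContinuousLinearMap.opNorm_le_bound _ (by positivity) fun w => ?_
    have : (∑ i : Fin d, (FF d Q T c (upd d n i) (p+1) y) •
        (ContinuousLinearMap.proj i : (Fin d → ℝ) →L[ℝ] ℝ)) w
        = ∑ i : Fin d, FF d Q T c (upd d n i) (p+1) y * w i := by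
      simp [ContinuousLinearMap.sum_apply, smul_eq_mul]
    rw [this, Real.norm_eq_abs]
    calc |∑ i : Fin d, FF d Q T c (upd d n i) (p+1) y * w i|
        ≤ ∑ i : Fin d, |FF d Q T c (upd d n i) (p+1) y * w i| := Finset.abs_sum_le_sum_abs _ _
      _ ≤ ∑ _i : Fin d, (c * (Q:ℝ)^(p+1) * Mb k ^ d) * ‖w‖ := by
          refine Finset.sum_le_sum fun i _ => ?_
          rw [abs_mul]
          have h1 : |FF d Q T c (upd d n i) (p+1) y| ≤ c * (Q:ℝ)^(p+1) * Mb k ^ d := by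
            refine FF_abs_le d Q hT hc k (fun j => ?_) (p+1) y
            by_cases hj : j = i
            · subst hj; simp only [upd, Function.update_self]; exact Nat.succ_le_succ (hn j)
            · rw [upd, Function.update_of_ne hj]; exact le_trans (hn j) (Nat.le_succ k)
          have h2 : |w i| ≤ ‖w‖ := by
            simpa [Real.norm_eq_abs] using norm_le_pi_norm w i
          exact mul_le_mul h1 h2 (abs_nonneg _) hC0
      _ = C * ‖w‖ := by rw [Finset.sum_const, Finset.card_univ, Fintype.card_fin, nsmul_eq_mul, hC]; ring
  calc |FF d Q T c n p x - FF d Q T c n p z|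
      ≤ C * ‖x - z‖ := by
        have := (convex_cube d).norm_image_sub_le_of_norm_fderiv_le
          (f := FF d Q T c n p)
          (fun y _ => ((contDiff_FF d Q T c n p).differentiable (by simp)).differentiableAt)
          (fun y _ => hbound y) hz hx
        simpa [Real.norm_eq_abs] using this
    _ ≤ C * eucDist x z := by
        have : (0:ℝ) ≤ C := by positivity
        exact mul_le_mul_of_nonneg_left (norm_sub_le_eucDist x z) this


lemma Q_mul_gridPt (hQ : 0 < Q) (v : Fin d → Fin Q) (i : Fin d) :
    (Q:ℝ) * gridPt d Q v i = (v i : ℝ) + 1/2 := by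
  have hQ' : (Q:ℝ) ≠ 0 := Nat.cast_ne_zero.mpr hQ.ne'
  simp only [gridPt]
  field_simp

lemma gridPt_mem_cube (hQ : 0 < Q) (v : Fin d → Fin Q) : gridPt d Q v ∈ cube d := by
  intro i
  have h1 : (v i : ℝ) ≤ (Q:ℝ) - 1 := by
    have := v i |>.isLt
    have : ((v i : ℕ) : ℝ) ≤ ((Q:ℝ) - 1) := by
      have h := Nat.lt_iff_add_one_le.mp (v i).isLt
      have : ((v i : ℕ) + 1 : ℝ) ≤ (Q:ℝ) := by exact_mod_cast h
      linarith
    exact this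
  have hQ0 : (0:ℝ) < Q := Nat.cast_pos.mpr hQ
  constructor
  · apply div_nonneg (by positivity) (by positivity)
  · rw [gridPt, div_le_one (by positivity)]
    linarith

lemma gridPt_mem_oddGrid (hQ : 0 < Q) (v : Fin d → Fin Q) : gridPt d Q v ∈ oddGrid d Q := by
  refine ⟨gridPt_mem_cube d Q hQ v, fun i => ⟨2 * (v i : ℤ) + 1, odd_two_mul_add_one _, ?_⟩⟩
  rw [gridPt]
  push_cast
  ring

lemma oddGrid_exists (hQ : 0 < Q) {a : Fin d → ℝ} (ha : a ∈ oddGrid d Q) :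
    ∃ v : Fin d → Fin Q, gridPt d Q v = a := by
  obtain ⟨hc, hodd⟩ := ha
  have hQ0 : (0:ℝ) < Q := Nat.cast_pos.mpr hQ
  have key : ∀ i, ∃ j : Fin Q, a i = (2 * (j : ℝ) + 1) / (2 * (Q:ℝ)) := by
    intro i
    obtain ⟨k, ⟨m, hm⟩, hk⟩ := hodd i
    have h0 : (0:ℝ) ≤ a i := (hc i).1
    have h1 : a i ≤ 1 := (hc i).2
    have hk0 : (0:ℝ) ≤ (k:ℝ) := by
      by_contra hneg
      push_neg at hneg
      have : a i < 0 := by rw [hk]; exact div_neg_of_neg_of_pos hneg (by positivity)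
      linarith
    have hkle : (k:ℝ) ≤ 2 * Q := by
      by_contra hgt
      push_neg at hgt
      have : 1 < a i := by rw [hk, lt_div_iff₀ (by positivity)]; linarith
      linarith
    have hk0' : 0 ≤ k := by exact_mod_cast hk0
    have hkle' : k ≤ 2 * Q := by exact_mod_cast hkle
    have hm0 : 0 ≤ m := by omega
    have hmQ : m < Q := by omega
    refine ⟨⟨m.toNat, by omega⟩, ?_⟩
    rw [hk]
    congr 1
    have : ((m.toNat : ℕ) : ℝ) = (m : ℝ) := by exact_mod_cast congrArg Int.cast (Int.toNat_of_nonneg hm0)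
    rw [this]
    push_cast [hm]
    ring
  choose v hv using key
  exact ⟨v, funext fun i => by rw [gridPt, ← hv i]⟩

/-- Near the grid point `gridPt v`, the bump sum equals `T (gridPt v)`. -/
lemma sum_near {T : (Fin d → ℝ) → ℝ} (v : Fin d → Fin Q) {x : Fin d → ℝ}
    (hx : ∀ i, |(Q:ℝ) * x i - ((v i : ℝ) + 1/2)| ≤ 1/5) :
    ∑ w : Fin d → Fin Q, T (gridPt d Q w) * GvF d Q w 0 x = T (gridPt d Q v) := by
  classical
  rw [Finset.sum_eq_single v]
  · have : GvF d Q v 0 x = 1 := by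
      rw [GvF]
      rw [Finset.prod_eq_one fun i _ => ?_]
      simp only [Pi.zero_apply, iteratedDeriv_zero]
      exact g_one (hx i)
    rw [this, mul_one]
  · intro w _ hw
    obtain ⟨i, hi⟩ : ∃ i, w i ≠ v i := by
      by_contra hcc; push_neg at hcc; exact hw (funext hcc)
    have h1 : (1:ℝ) ≤ |(w i : ℝ) - (v i : ℝ)| := by
      have : (w i : ℕ) ≠ (v i : ℕ) := fun hcc => hi (Fin.ext hcc)
      have h2 : ((w i : ℕ) : ℤ) ≠ ((v i : ℕ) : ℤ) := fun hcc => this (by exact_mod_cast hcc)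
      have h3 : (1:ℤ) ≤ |((w i : ℕ) : ℤ) - ((v i : ℕ) : ℤ)| := Int.one_le_abs (sub_ne_zero.mpr h2)
      calc (1:ℝ) ≤ (|((w i : ℕ) : ℤ) - ((v i : ℕ) : ℤ)| : ℤ) := by exact_mod_cast h3
        _ = |(w i : ℝ) - (v i : ℝ)| := by push_cast; ring_nf
    have h2 : 2/5 < |(Q:ℝ) * x i - ((w i : ℝ) + 1/2)| := by
      have htri : |(w i : ℝ) - (v i : ℝ)| ≤
          |(Q:ℝ) * x i - ((w i : ℝ) + 1/2)| + |(Q:ℝ) * x i - ((v i : ℝ) + 1/2)| := by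
        have : (w i : ℝ) - (v i : ℝ) =
            ((Q:ℝ) * x i - ((v i : ℝ) + 1/2)) - ((Q:ℝ) * x i - ((w i : ℝ) + 1/2)) := by ring
        rw [this]
        exact (abs_sub _ _).trans (by rw [add_comm])
      have := hx i
      linarith
    have : GvF d Q w 0 x = 0 :=
      Finset.prod_eq_zero (Finset.mem_univ i) (by
        simpa only [Pi.zero_apply, iteratedDeriv_zero] using dg_zero 0 h2)
    rw [this, mul_zero]
  · intro h; exact absurd (Finset.mem_univ v) h

end Aux

set_option maxHeartbeats 2000000 in
theorem statement16 (d : ℕ) (hd : 0 < d) (β r : ℝ) (hβ : 0 < β) (hr : 0 < r) :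
    ∃ c₁ : ℝ, c₁ ∈ Set.Ioo (0 : ℝ) (1 / 9999) ∧
      ∀ Qn : ℕ, 2 ≤ Qn → ∀ T : (Fin d → ℝ) → ℝ,
        (∀ a ∈ oddGrid d Qn, T a = 1 ∨ T a = -1) →
        ∃ f : (Fin d → ℝ) → ℝ, MemHolderBall d β r f ∧
          sSup {t | ∃ x ∈ cube d, t = |f x|} = c₁ / (Qn : ℝ) ^ β ∧
          ∀ a ∈ oddGrid d Qn, ∀ x ∈ cube d, eucDist x a ≤ 1 / (5 * (Qn : ℝ)) →
            f x = (c₁ / (Qn : ℝ) ^ β) * T a := by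
  classical
  set k : ℕ := ⌈β⌉₊ - 1 with hk
  have hk1 : 1 ≤ ⌈β⌉₊ := Nat.one_le_iff_ne_zero.mpr (Nat.ceil_pos.mpr hβ).ne'
  have hkR : (k : ℝ) = (⌈β⌉₊ : ℝ) - 1 := by
    rw [hk, Nat.cast_sub hk1]; norm_num
  have hceil : (⌈β⌉₊ : ℝ) < β + 1 := Nat.ceil_lt_add_one hβ.le
  have hkβ : (k:ℝ) ≤ β := by rw [hkR]; linarith
  set lam : ℝ := β - (⌈β⌉₊:ℝ) + 1 with hlam
  have hlam0 : 0 < lam := by rw [hlam]; linarith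
  have hlam1 : lam ≤ 1 := by have := Nat.le_ceil β; rw [hlam]; linarith
  have hklam : (k:ℝ) + lam = β := by rw [hkR, hlam]; ring
  set Mk : ℝ := Mb k with hMk
  have hM1 : 1 ≤ Mk := one_le_Mb k
  have hM0 : 0 < Mk ^ d := by positivity
  have hd1 : (1:ℝ) ≤ (d:ℝ) := by exact_mod_cast hd
  set c₁ : ℝ := min (1/19998) (r / ((1 + 2*(d:ℝ)) * Mk^d + 1)) with hc₁
  have hDpos : 0 < (1 + 2*(d:ℝ)) * Mk^d + 1 := by positivity
  have hc₁pos : 0 < c₁ := lt_min (by norm_num) (div_pos hr hDpos)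
  have hc₁lt : c₁ < 1/9999 := lt_of_le_of_lt (min_le_left _ _) (by norm_num)
  have hABr : c₁ * ((1 + 2*(d:ℝ)) * Mk^d) ≤ r := by
    have h1 : c₁ ≤ r / ((1 + 2*(d:ℝ)) * Mk^d + 1) := min_le_right _ _
    have h2 : (0:ℝ) ≤ (1 + 2*(d:ℝ)) * Mk^d := by positivity
    calc c₁ * ((1 + 2*(d:ℝ)) * Mk^d)
        ≤ (r / ((1 + 2*(d:ℝ)) * Mk^d + 1)) * ((1 + 2*(d:ℝ)) * Mk^d) :=
          mul_le_mul_of_nonneg_right h1 h2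
      _ ≤ r := by
          rw [div_mul_eq_mul_div, div_le_iff₀ hDpos]
          nlinarith [hr.le]
  refine ⟨c₁, ⟨hc₁pos, hc₁lt⟩, ?_⟩
  intro Qn hQn T hT
  have hQ0 : 0 < Qn := by omega
  have hQR : (0:ℝ) < (Qn:ℝ) := by exact_mod_cast hQ0
  have hQ1 : (1:ℝ) ≤ (Qn:ℝ) := by exact_mod_cast hQ0
  have hQβpos : (0:ℝ) < (Qn:ℝ) ^ β := Real.rpow_pos_of_pos hQR β
  set c' : ℝ := c₁ / (Qn:ℝ) ^ β with hc'
  have hc'pos : 0 < c' := div_pos hc₁pos hQβpos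
  set f : (Fin d → ℝ) → ℝ := FF d Qn T c' 0 0 with hf
  have hT1 : ∀ v : Fin d → Fin Qn, |T (gridPt d Qn v)| ≤ 1 := by
    intro v
    rcases hT _ (gridPt_mem_oddGrid d Qn hQ0 v) with h | h <;> rw [h] <;> norm_num
  have hpow : ∀ p : ℕ, (p:ℝ) ≤ β → c' * (Qn:ℝ)^p ≤ c₁ := by
    intro p hp
    rw [hc', div_mul_eq_mul_div, div_le_iff₀ hQβpos]
    have he : ((Qn:ℝ)^p : ℝ) = (Qn:ℝ)^((p:ℝ)) := (Real.rpow_natCast _ p).symm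
    rw [he]
    have h3 := Real.rpow_le_rpow_of_exponent_le hQ1 hp
    nlinarith [hc₁pos.le, Real.rpow_pos_of_pos hQR ((p:ℝ))]
  -- locality
  have hnear : ∀ a ∈ oddGrid d Qn, ∀ x : Fin d → ℝ, eucDist x a ≤ 1/(5*(Qn:ℝ)) →
      f x = c' * T a := by
    intro a ha x hdist
    obtain ⟨v, hv⟩ := oddGrid_exists d Qn hQ0 ha
    have hxi : ∀ i, |(Qn:ℝ) * x i - ((v i : ℝ) + 1/2)| ≤ 1/5 := by
      intro i
      have h1 : |x i - a i| ≤ eucDist x a := abs_coord_le_eucDist x a i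
      have h2 : (Qn:ℝ) * a i = (v i : ℝ) + 1/2 := by
        rw [← hv]; exact Q_mul_gridPt d Qn hQ0 v i
      have h3 : (Qn:ℝ) * x i - ((v i:ℝ) + 1/2) = (Qn:ℝ) * (x i - a i) := by
        rw [← h2]; ring
      rw [h3, abs_mul, abs_of_nonneg hQR.le]
      calc (Qn:ℝ) * |x i - a i| ≤ (Qn:ℝ) * (1/(5*(Qn:ℝ))) := by
            exact mul_le_mul_of_nonneg_left (h1.trans hdist) hQR.le
        _ = 1/5 := by field_simp
    rw [hf]
    simp only [FF]
    rw [sum_near d Qn v hxi, hv]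
    norm_num
  -- sup bound
  have hub : ∀ x : Fin d → ℝ, |f x| ≤ c' := by
    intro x
    rw [hf]
    simp only [FF, pow_zero, mul_one]
    rw [abs_mul, abs_of_nonneg hc'pos.le]
    have := sum_abs_le d Qn hT1 (zero_le_one) x (fun v => GvF_abs_le_one d Qn x)
    nlinarith [hc'pos.le]
  refine ⟨f, ?_, ?_, ?_⟩
  · -- MemHolderBall
    refine ⟨?_, ?_, c₁ * Mk^d, 2*(d:ℝ)*c₁*Mk^d, ?_, ?_, ?_⟩
    · intro l _ x hx
      obtain ⟨n', hn', heq⟩ := derivListW_FF d Qn T c' l 0 0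
      rw [← hf] at heq
      exact (((contDiff_FF d Qn T c' n' (0 + l.length)).differentiable
        (by simp)).differentiableAt.differentiableWithinAt).congr
        (fun y hy => heq y hy) (heq x hx)
    · intro l _ x hx
      obtain ⟨n', hn', heq⟩ := derivListW_FF d Qn T c' l 0 0
      rw [← hf] at heq
      exact ((contDiff_FF d Qn T c' n' (0 + l.length)).continuous.continuousWithinAt).congr
        (fun y hy => heq y hy) (heq x hx)
    · nlinarith [hABr]
    · -- uniform bound by A
      intro l hl x hx
      obtain ⟨n', hn', heq⟩ := derivListW_FF d Qn T c' l 0 0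
      rw [← hf] at heq
      rw [heq x hx]
      have hlk : l.length ≤ k := hl
      have hb : |FF d Qn T c' n' (0 + l.length) x| ≤ c' * (Qn:ℝ)^(0 + l.length) * Mk^d := by
        refine FF_abs_le d Qn hT1 hc'pos.le k (fun j => ?_) _ x
        have := hn' j
        simp only [Pi.zero_apply, add_zero] at this
        omega
      refine hb.trans ?_
      have h2 : c' * (Qn:ℝ)^(0 + l.length) ≤ c₁ := by
        refine hpow _ ?_
        have h3 : ((0 + l.length : ℕ):ℝ) ≤ (k:ℝ) := by
          have : (0 + l.length : ℕ) ≤ k := by omega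
          exact_mod_cast this
        exact h3.trans hkβ
      exact mul_le_mul_of_nonneg_right h2 hM0.le
    · -- Hölder seminorm
      intro l hl x hx z hz hxz
      obtain ⟨n', hn', heq⟩ := derivListW_FF d Qn T c' l 0 0
      rw [← hf] at heq
      rw [heq x hx, heq z hz, ← hlam]
      have hnk : ∀ j, n' j ≤ k := by
        intro j
        have := hn' j
        simp only [Pi.zero_apply, add_zero] at this
        omega
      set ρ : ℝ := eucDist x z with hρ
      have hρ0 : 0 < ρ := eucDist_pos hxz
      set E : ℝ := c' * (Qn:ℝ)^(0 + l.length) * Mk^d with hE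
      have hE0 : 0 < E := by
        rw [hE]; exact mul_pos (mul_pos hc'pos (pow_pos hQR _)) hM0
      have hb1 : |FF d Qn T c' n' (0 + l.length) x - FF d Qn T c' n' (0 + l.length) z|
          ≤ 2 * E := by
        have hbx := FF_abs_le d Qn hT1 hc'pos.le k (fun j => (hnk j).trans (Nat.le_succ k)) (0 + l.length) x
        have hbz := FF_abs_le d Qn hT1 hc'pos.le k (fun j => (hnk j).trans (Nat.le_succ k)) (0 + l.length) z
        rw [← hMk] at hbx hbz
        calc |FF d Qn T c' n' (0 + l.length) x - FF d Qn T c' n' (0 + l.length) z|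
            ≤ |FF d Qn T c' n' (0 + l.length) x| + |FF d Qn T c' n' (0 + l.length) z| :=
              abs_sub _ _
          _ ≤ 2 * E := by rw [hE]; linarith
      have hb2 : |FF d Qn T c' n' (0 + l.length) x - FF d Qn T c' n' (0 + l.length) z|
          ≤ ((d:ℝ) * E * ((Qn:ℝ) * ρ)) := by
        have := FF_lip d Qn hT1 hc'pos.le k hnk (0 + l.length) hx hz
        rw [← hMk, ← hρ] at this
        refine this.trans (le_of_eq ?_)
        rw [hE, pow_succ]; ring
      have hQρ : (0:ℝ) ≤ (Qn:ℝ) * ρ := by positivity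
      have hmin : |FF d Qn T c' n' (0 + l.length) x - FF d Qn T c' n' (0 + l.length) z|
          ≤ 2*(d:ℝ)*E * min ((Qn:ℝ)*ρ) 1 := by
        rcases le_or_gt ((Qn:ℝ)*ρ) 1 with hm | hm
        · rw [min_eq_left hm]
          refine hb2.trans ?_
          have h9 : 0 ≤ (d:ℝ)*E*((Qn:ℝ)*ρ) :=
            mul_nonneg (mul_nonneg (Nat.cast_nonneg d) hE0.le) hQρ
          linarith
        · rw [min_eq_right hm.le]
          refine hb1.trans ?_
          nlinarith [hE0.le]
      have hmin2 : min ((Qn:ℝ)*ρ) 1 ≤ ((Qn:ℝ)*ρ) ^ lam := min_le_rpow hQρ hlam0 hlam1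
      have hsplit : ((Qn:ℝ)*ρ)^lam = (Qn:ℝ)^lam * ρ^lam := Real.mul_rpow hQR.le hρ0.le
      have hkey : c' * (Qn:ℝ)^((0 + l.length : ℕ)) * (Qn:ℝ)^lam = c₁ := by
        have hlen : ((0 + l.length : ℕ):ℝ) = (k:ℝ) := by
          have : (0 + l.length : ℕ) = k := by omega
          exact_mod_cast this
        rw [hc', ← Real.rpow_natCast (Qn:ℝ) (0 + l.length), hlen,
          div_mul_eq_mul_div, div_mul_eq_mul_div, mul_assoc, ← Real.rpow_add hQR, hklam]
        field_simp
      calc |FF d Qn T c' n' (0 + l.length) x - FF d Qn T c' n' (0 + l.length) z|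
          ≤ 2*(d:ℝ)*E * min ((Qn:ℝ)*ρ) 1 := hmin
        _ ≤ 2*(d:ℝ)*E * (((Qn:ℝ)*ρ) ^ lam) := by
            refine mul_le_mul_of_nonneg_left hmin2 ?_
            nlinarith [hE0.le]
        _ = (2*(d:ℝ)*c₁*Mk^d) * ρ^lam := by
            rw [hsplit, hE]
            linear_combination (2*(d:ℝ)*Mk^d*ρ^lam) * hkey
  · -- sSup
    have hx0 : gridPt d Qn (fun _ => ⟨0, hQ0⟩) ∈ cube d := gridPt_mem_cube d Qn hQ0 _
    have ha0 : gridPt d Qn (fun _ => ⟨0, hQ0⟩) ∈ oddGrid d Qn := gridPt_mem_oddGrid d Qn hQ0 _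
    have hdist0 : eucDist (gridPt d Qn (fun _ => ⟨0, hQ0⟩)) (gridPt d Qn (fun _ => ⟨0, hQ0⟩))
        ≤ 1/(5*(Qn:ℝ)) := by
      have : eucDist (gridPt d Qn (fun _ => ⟨0, hQ0⟩)) (gridPt d Qn (fun _ => ⟨0, hQ0⟩)) = 0 := by
        simp [eucDist]
      rw [this]; positivity
    have hval := hnear _ ha0 _ hdist0
    have habs : |f (gridPt d Qn (fun _ => ⟨0, hQ0⟩))| = c' := by
      rw [hval, abs_mul, abs_of_nonneg hc'pos.le]
      rcases hT _ ha0 with h | h <;> rw [h] <;> norm_num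
    have hgreat : IsGreatest {t | ∃ x ∈ cube d, t = |f x|} c' :=
      ⟨⟨_, hx0, habs.symm⟩, fun t ⟨x, _, ht⟩ => ht ▸ hub x⟩
    rw [hgreat.csSup_eq]
  · intro a ha x _ hdist
    exact hnear a ha x hdist

end

end DNNLogistic
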